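/- Occupancy invariance: for any school choice problem P, any stable-dominating matching ν, and any school s ∈ S, the number of students assigned to s under ν equals the number assigned to s under DA: |ν⁻¹(s)| = |DA⁻¹_s(P)|. -/

import Mathlib

/-!
A school choice problem: finitely many students `I` and schools `S`
(with a distinguished null school of quota `|I|`).  Each student `i` has a
strict preference over schools represented by its rank function
`rk i : S → ℕ` (a bijection onto `{1, …, |S|}`, where rank 1 is the most
preferred school); each school `s` has a quota `quota s ≥ 1` and a strict
priority over students represented by `prio s : I → ℕ`
(`i ▷_s j` iff `prio s i < prio s j`).
-/
structure SchoolChoice (I S : Type) [Fintype I] [Fintype S]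
    [DecidableEq I] [DecidableEq S] where
  nullSchool : S
  quota : S → ℕ
  rk : I → S → ℕ
  prio : S → I → ℕ
  quota_pos : ∀ s : S, 1 ≤ quota s
  quota_null : quota nullSchool = Fintype.card I
  rk_inj : ∀ i : I, Function.Injective (rk i)
  rk_mem : ∀ (i : I) (s : S), rk i s ∈ Finset.Icc 1 (Fintype.card S)
  prio_inj : ∀ s : S, Function.Injective (prio s)

namespace SchoolChoice

open scoped Classical

variable {I S : Type} [Fintype I] [Fintype S] [DecidableEq I] [DecidableEq S]

/-- `μ` is a matching: no school is assigned more students than its quota. -/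
def IsMatching (P : SchoolChoice I S) (μ : I → S) : Prop :=
  ∀ s : S, (Finset.univ.filter fun i => μ i = s).card ≤ P.quota s

/-- Given the sets `R i` of schools that have rejected student `i` so far,
student `i` proposes to her most preferred school that has not rejected her. -/
noncomputable def propose (P : SchoolChoice I S) (R : I → Finset S) (i : I) : S :=
  if h : (Finset.univ \ R i).Nonempty then
    (Finset.exists_min_image (Finset.univ \ R i) (P.rk i) h).choose
  else P.nullSchool

/-- At the DA round with rejection state `R`, school `s` rejects student `i`:
`i` applies to `s` and at least `quota s` applicants to `s` have higher priority. -/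
def rejectsAt (P : SchoolChoice I S) (R : I → Finset S) (s : S) (i : I) : Prop :=
  P.propose R i = s ∧
    P.quota s ≤ (Finset.univ.filter fun j =>
      P.propose R j = s ∧ P.prio s j < P.prio s i).card

/-- One round of student-proposing Deferred Acceptance: record new rejections. -/
noncomputable def stepR (P : SchoolChoice I S) (R : I → Finset S) : I → Finset S :=
  fun i => R i ∪ (Finset.univ.filter fun s => P.rejectsAt R s i)

/-- Rejection state after `n` rounds of Deferred Acceptance. -/
noncomputable def daR (P : SchoolChoice I S) : ℕ → I → Finset S
  | 0 => fun _ => (∅ : Finset S)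
  | n + 1 => P.stepR (P.daR n)

/-- The outcome of the student-proposing Deferred Acceptance algorithm:
iterate rounds until no rejection occurs (which happens within
`|I|·|S| + 1` rounds); each student is matched to the school holding her. -/
noncomputable def DA (P : SchoolChoice I S) : I → S :=
  P.propose (P.daR (Fintype.card I * Fintype.card S + 1))

/-- A matching `ν` is stable-dominating if every student weakly prefers
`ν` to the DA outcome. -/
def StableDominating (P : SchoolChoice I S) (ν : I → S) : Prop :=
  P.IsMatching ν ∧ ∀ i : I, P.rk i (ν i) ≤ P.rk i (P.DA i)

/-- Student `i` is unimprovable: every stable-dominating matching assigns `i`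
to her DA school. -/
def Unimprovable (P : SchoolChoice I S) (i : I) : Prop :=
  ∀ ν : I → S, P.StableDominating ν → ν i = P.DA i

/-- Edge of the envy digraph `G^DA(P)`: `i` prefers `j`'s DA school to her own. -/
def Envy (P : SchoolChoice I S) (i j : I) : Prop :=
  P.rk i (P.DA j) < P.rk i (P.DA i)

/-- Student `i` lies on a directed cycle of the envy digraph `G^DA(P)`. -/
def OnCycle (P : SchoolChoice I S) (i : I) : Prop :=
  ∃ (m : ℕ) (c : ℕ → I), 0 < m ∧ c 0 = i ∧ c m = i ∧
    ∀ k < m, P.Envy (c k) (c (k + 1))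

/-- Student `i` desires school `s` in matching `μ`. -/
def Desires (P : SchoolChoice I S) (μ : I → S) (i : I) (s : S) : Prop :=
  P.rk i s < P.rk i (μ i)

/-- `μ` is non-wasteful: every desired school is filled to quota. -/
def NonWasteful (P : SchoolChoice I S) (μ : I → S) : Prop :=
  ∀ s : S, (∃ i : I, P.Desires μ i s) →
    (Finset.univ.filter fun i => μ i = s).card = P.quota s

/-- `μ` is stable: a non-wasteful matching with no priority violations. -/
def Stable (P : SchoolChoice I S) (μ : I → S) : Prop :=
  P.IsMatching μ ∧ P.NonWasteful μ ∧
    ¬ ∃ (i j : I) (s : S), P.Desires μ i s ∧ μ j = s ∧ P.prio s i < P.prio s j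

/-- `μ` Pareto-dominates `ν`. -/
def ParetoDominates (P : SchoolChoice I S) (μ ν : I → S) : Prop :=
  (∀ i : I, P.rk i (μ i) ≤ P.rk i (ν i)) ∧ ∃ i : I, P.rk i (μ i) < P.rk i (ν i)

/-- `μ` is a Pareto-efficient matching. -/
def ParetoEfficient (P : SchoolChoice I S) (μ : I → S) : Prop :=
  P.IsMatching μ ∧ ∀ ν : I → S, P.IsMatching ν → ¬ P.ParetoDominates ν μ

end SchoolChoice

namespace SchoolChoice

open Finset
open scoped Classical

variable {I S : Type} [Fintype I] [Fintype S] [DecidableEq I] [DecidableEq S]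

lemma propose_spec (P : SchoolChoice I S) (R : I → Finset S) (i : I)
    (h : (Finset.univ \ R i).Nonempty) :
    P.propose R i ∈ Finset.univ \ R i ∧
      ∀ t ∈ Finset.univ \ R i, P.rk i (P.propose R i) ≤ P.rk i t := by
  rw [propose, dif_pos h]
  exact (Finset.exists_min_image (Finset.univ \ R i) (P.rk i) h).choose_spec

lemma not_rejects_null (P : SchoolChoice I S) (R : I → Finset S) (i : I) :
    ¬ P.rejectsAt R P.nullSchool i := by
  rintro ⟨-, hq⟩
  have hle : (Finset.univ.filter fun j =>
      P.propose R j = P.nullSchool ∧ P.prio P.nullSchool j < P.prio P.nullSchool i).card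
      ≤ (Finset.univ.erase i).card := by
    apply Finset.card_le_card
    intro j hj
    simp only [Finset.mem_filter] at hj
    refine Finset.mem_erase.2 ⟨fun h => ?_, Finset.mem_univ j⟩
    subst h; exact lt_irrefl _ hj.2.2
  rw [Finset.card_erase_of_mem (Finset.mem_univ i), Finset.card_univ] at hle
  have hpos : 0 < Fintype.card I := Fintype.card_pos_iff.2 ⟨i⟩
  rw [P.quota_null] at hq
  omega

lemma null_not_mem_daR (P : SchoolChoice I S) (n : ℕ) (i : I) :
    P.nullSchool ∉ P.daR n i := by
  induction n with
  | zero => simp [daR]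
  | succ n ih =>
    simp only [daR, stepR, Finset.mem_union, Finset.mem_filter]
    rintro (h | ⟨-, h⟩)
    · exact ih h
    · exact P.not_rejects_null _ i h

lemma daR_sdiff_nonempty (P : SchoolChoice I S) (n : ℕ) (i : I) :
    (Finset.univ \ P.daR n i).Nonempty :=
  ⟨P.nullSchool, Finset.mem_sdiff.2 ⟨Finset.mem_univ _, P.null_not_mem_daR n i⟩⟩

lemma propose_stepR (P : SchoolChoice I S) (n : ℕ) (j : I) (s : S)
    (hpro : P.propose (P.daR n) j = s) (hrej : ¬ P.rejectsAt (P.daR n) s j) :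
    P.propose (P.daR (n + 1)) j = s := by
  have hne : (Finset.univ \ P.daR n j).Nonempty := P.daR_sdiff_nonempty n j
  have hne' : (Finset.univ \ P.daR (n + 1) j).Nonempty := P.daR_sdiff_nonempty (n + 1) j
  obtain ⟨hmem, hmin⟩ := P.propose_spec (P.daR n) j hne
  obtain ⟨hmem', hmin'⟩ := P.propose_spec (P.daR (n + 1)) j hne'
  rw [hpro] at hmem hmin
  have hsnot : s ∉ P.daR (n + 1) j := by
    simp only [daR, stepR, Finset.mem_union, Finset.mem_filter]
    rintro (h | ⟨-, h⟩)
    · exact (Finset.mem_sdiff.1 hmem).2 h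
    · exact hrej h
  have hs' : s ∈ Finset.univ \ P.daR (n + 1) j :=
    Finset.mem_sdiff.2 ⟨Finset.mem_univ _, hsnot⟩
  have h1 : P.rk j (P.propose (P.daR (n + 1)) j) ≤ P.rk j s := hmin' s hs'
  have hsub : Finset.univ \ P.daR (n + 1) j ⊆ Finset.univ \ P.daR n j := by
    apply Finset.sdiff_subset_sdiff le_rfl
    exact Finset.subset_union_left
  have h2 : P.rk j s ≤ P.rk j (P.propose (P.daR (n + 1)) j) := hmin _ (hsub hmem')
  exact P.rk_inj j (le_antisymm h1 h2)

lemma card_nonrejected {q : ℕ} (A : Finset I) (pr : I → ℕ) (hpr : Function.Injective pr)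
    (hA : q ≤ A.card) :
    q ≤ (A.filter fun j => (A.filter fun k => pr k < pr j).card < q).card := by
  set c : I → ℕ := fun j => (A.filter fun k => pr k < pr j).card with hc
  have hcmono : ∀ j ∈ A, ∀ j' ∈ A, pr j < pr j' → c j < c j' := by
    intro j hj j' hj' hlt
    apply Finset.card_lt_card
    rw [Finset.ssubset_iff_of_subset]
    · exact ⟨j, Finset.mem_filter.2 ⟨hj, hlt⟩, by
        simp only [Finset.mem_filter]; rintro ⟨-, h⟩; exact lt_irrefl _ h⟩
    · intro k hk
      simp only [Finset.mem_filter] at hk ⊢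
      exact ⟨hk.1, hk.2.trans hlt⟩
  have hbd : ∀ j ∈ A, c j < A.card := by
    intro j hj
    have : (A.filter fun k => pr k < pr j) ⊆ A.erase j := by
      intro k hk
      simp only [Finset.mem_filter] at hk
      refine Finset.mem_erase.2 ⟨fun h => ?_, hk.1⟩
      subst h; exact lt_irrefl _ hk.2
    have h1 := Finset.card_le_card this
    rw [Finset.card_erase_of_mem hj] at h1
    have h2 : 0 < A.card := Finset.card_pos.2 ⟨j, hj⟩
    show (A.filter fun k => pr k < pr j).card < A.card
    omega
  have hrej : (A.filter fun j => ¬ (A.filter fun k => pr k < pr j).card < q).card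
      ≤ A.card - q := by
    have : (A.filter fun j => ¬ c j < q).card ≤ (Finset.Ico q A.card).card := by
      apply Finset.card_le_card_of_injOn c
      · intro j hj
        simp only [Finset.mem_coe, Finset.mem_filter, not_lt] at hj
        exact Finset.mem_Ico.2 ⟨hj.2, hbd j (hj.1)⟩
      · intro j hj j' hj' heq
        simp only [Finset.coe_filter, Set.mem_setOf_eq] at hj hj'
        by_contra hne
        rcases lt_trichotomy (pr j) (pr j') with h | h | h
        · exact absurd heq (ne_of_lt (hcmono j hj.1 j' hj'.1 h))
        · exact hne (hpr h)
        · exact absurd heq.symm (ne_of_lt (hcmono j' hj'.1 j hj.1 h))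
    rwa [Nat.card_Ico] at this
  have hsplit := Finset.card_filter_add_card_filter_not
    (s := A) (p := fun j => (A.filter fun k => pr k < pr j).card < q)
  omega

lemma applicants_persist (P : SchoolChoice I S) (s : S) (n : ℕ)
    (h : P.quota s ≤ (Finset.univ.filter fun j => P.propose (P.daR n) j = s).card) :
    P.quota s ≤ (Finset.univ.filter fun j => P.propose (P.daR (n + 1)) j = s).card := by
  set A := Finset.univ.filter fun j => P.propose (P.daR n) j = s with hA
  have hkey : ∀ j ∈ A, ((A.filter fun k => P.prio s k < P.prio s j).card < P.quota s)
      → ¬ P.rejectsAt (P.daR n) s j := by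
    intro j hj hcard
    rintro ⟨-, hq⟩
    have : (Finset.univ.filter fun k =>
        P.propose (P.daR n) k = s ∧ P.prio s k < P.prio s j)
        = A.filter fun k => P.prio s k < P.prio s j := by
      rw [hA, Finset.filter_filter]
    rw [this] at hq
    omega
  have hcn := card_nonrejected A (P.prio s) (P.prio_inj s) h
  refine le_trans hcn (Finset.card_le_card ?_)
  intro j hj
  simp only [Finset.mem_filter] at hj
  have hjA := hj.1
  have hjs : P.propose (P.daR n) j = s := (Finset.mem_filter.1 hjA).2
  refine Finset.mem_filter.2 ⟨Finset.mem_univ _, ?_⟩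
  exact P.propose_stepR n j s hjs (hkey j hjA hj.2)

lemma applicants_persist' (P : SchoolChoice I S) (s : S) (n m : ℕ) (hnm : n ≤ m)
    (h : P.quota s ≤ (Finset.univ.filter fun j => P.propose (P.daR n) j = s).card) :
    P.quota s ≤ (Finset.univ.filter fun j => P.propose (P.daR m) j = s).card := by
  induction m, hnm using Nat.le_induction with
  | base => exact h
  | succ m hnm ih => exact P.applicants_persist s m ih

lemma mem_daR_rejected (P : SchoolChoice I S) (m : ℕ) (i : I) (s : S)
    (h : s ∈ P.daR m i) : ∃ n < m, P.rejectsAt (P.daR n) s i := by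
  induction m with
  | zero => simp [daR] at h
  | succ m ih =>
    simp only [daR, stepR, Finset.mem_union, Finset.mem_filter] at h
    rcases h with h | ⟨-, h⟩
    · obtain ⟨n, hn, hr⟩ := ih h
      exact ⟨n, by omega, hr⟩
    · exact ⟨m, by omega, h⟩

lemma quota_le_DA_card (P : SchoolChoice I S) (i : I) (s : S)
    (h : P.rk i s < P.rk i (P.DA i)) :
    P.quota s ≤ (Finset.univ.filter fun j => P.DA j = s).card := by
  set N := Fintype.card I * Fintype.card S + 1 with hN
  have hne : (Finset.univ \ P.daR N i).Nonempty := P.daR_sdiff_nonempty N i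
  obtain ⟨hmem, hmin⟩ := P.propose_spec (P.daR N) i hne
  have hsmem : s ∈ P.daR N i := by
    by_contra hs
    have := hmin s (Finset.mem_sdiff.2 ⟨Finset.mem_univ _, hs⟩)
    have hDA : P.DA i = P.propose (P.daR N) i := rfl
    rw [← hDA] at this
    omega
  obtain ⟨n, hn, ⟨-, hq⟩⟩ := P.mem_daR_rejected N i s hsmem
  have h0 : P.quota s ≤ (Finset.univ.filter fun j => P.propose (P.daR n) j = s).card := by
    refine hq.trans (Finset.card_le_card ?_)
    intro j hj
    simp only [Finset.mem_filter] at hj ⊢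
    exact ⟨hj.1, hj.2.1⟩
  have := P.applicants_persist' s n N (by omega) h0
  exact this

end SchoolChoice

/-- Occupancy invariance: for any school choice problem `P`, any
stable-dominating matching `ν` and any school `s`, the number of students
assigned to `s` under `ν` equals the number assigned to `s` under DA. -/
theorem occupancy_invariance {I S : Type} [Fintype I] [Fintype S]
    [DecidableEq I] [DecidableEq S] (P : SchoolChoice I S) (ν : I → S)
    (hν : P.StableDominating ν) (s : S) :
    (Finset.univ.filter fun i => ν i = s).card
      = (Finset.univ.filter fun i => P.DA i = s).card := by
  obtain ⟨hmatch, hdom⟩ := hν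
  have key : ∀ t : S, (Finset.univ.filter fun i => ν i = t).card
      ≤ (Finset.univ.filter fun i => P.DA i = t).card := by
    intro t
    by_cases h : ∃ i, ν i = t ∧ P.DA i ≠ t
    · obtain ⟨i, hi, hne⟩ := h
      have hlt : P.rk i t < P.rk i (P.DA i) := by
        have hd := hdom i
        rw [hi] at hd
        rcases lt_or_eq_of_le hd with h' | h'
        · exact h'
        · exact absurd (P.rk_inj i h').symm hne
      calc (Finset.univ.filter fun i => ν i = t).card ≤ P.quota t := hmatch t
        _ ≤ (Finset.univ.filter fun i => P.DA i = t).card := P.quota_le_DA_card i t hlt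
    · push_neg at h
      apply Finset.card_le_card
      intro j hj
      simp only [Finset.mem_filter] at hj ⊢
      exact ⟨hj.1, h j hj.2⟩
  have hsum : ∑ t : S, (Finset.univ.filter fun i => ν i = t).card
      = ∑ t : S, (Finset.univ.filter fun i => P.DA i = t).card := by
    rw [← Finset.card_eq_sum_card_fiberwise (fun x _ => Finset.mem_univ (ν x)),
        ← Finset.card_eq_sum_card_fiberwise (fun x _ => Finset.mem_univ (P.DA x))]
  exact ((Finset.sum_eq_sum_iff_of_le (fun t _ => key t)).1 hsum s (Finset.mem_univ s))
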